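/- If (c^n_k)_{k≥1} solves (E_n) and φ, ψ : ℕ → ℝ have at most polynomial growth, then (1/m_0(c^n)) Σ_{k,l≥1} [φ(k+l) − φ(k) − φ(l)] c^n_k c^n_l = (1/n) Σ_{k≥2} [φ(k) − k φ(1)] (k−1) c^n_k, and (2/m_0(c^n)) Σ_{k,l≥1} [ψ(k+l) − ψ(k)] k c^n_k c^n_l = (1/n) Σ_{k≥2}[ψ(k) − ψ(1)] k (k−1) c^n_k. -/

import Mathlib

open Finset

section AuxStmt13

def PolyBd (w : ℕ → ℝ) : Prop :=
  ∃ (C : ℝ) (N : ℕ), 0 ≤ C ∧ ∀ k : ℕ, |w k| ≤ C * ((k : ℝ) + 1) ^ N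

lemma PolyBd.const (a : ℝ) : PolyBd (fun _ => a) :=
  ⟨|a|, 0, abs_nonneg a, fun k => by simp⟩

lemma PolyBd.cast : PolyBd (fun k => (k : ℝ)) :=
  ⟨1, 1, zero_le_one, fun k => by
    rw [abs_of_nonneg (Nat.cast_nonneg k)]; simp⟩

lemma onelek (k : ℕ) : (1:ℝ) ≤ (k:ℝ) + 1 := by linarith [Nat.cast_nonneg (α := ℝ) k]

lemma PolyBd.mul {w v : ℕ → ℝ} (hw : PolyBd w) (hv : PolyBd v) :
    PolyBd (fun k => w k * v k) := by
  obtain ⟨C1, N1, hC1, h1⟩ := hw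
  obtain ⟨C2, N2, hC2, h2⟩ := hv
  refine ⟨C1 * C2, N1 + N2, mul_nonneg hC1 hC2, fun k => ?_⟩
  rw [abs_mul, pow_add]
  calc |w k| * |v k| ≤ (C1 * ((k:ℝ)+1)^N1) * (C2 * ((k:ℝ)+1)^N2) :=
        mul_le_mul (h1 k) (h2 k) (abs_nonneg _) (by positivity)
    _ = C1 * C2 * (((k:ℝ)+1)^N1 * ((k:ℝ)+1)^N2) := by ring

lemma PolyBd.add {w v : ℕ → ℝ} (hw : PolyBd w) (hv : PolyBd v) :
    PolyBd (fun k => w k + v k) := by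
  obtain ⟨C1, N1, hC1, h1⟩ := hw
  obtain ⟨C2, N2, hC2, h2⟩ := hv
  refine ⟨C1 + C2, max N1 N2, by linarith, fun k => ?_⟩
  have e1 : ((k:ℝ)+1)^N1 ≤ ((k:ℝ)+1)^(max N1 N2) :=
    pow_le_pow_right₀ (onelek k) (le_max_left _ _)
  have e2 : ((k:ℝ)+1)^N2 ≤ ((k:ℝ)+1)^(max N1 N2) :=
    pow_le_pow_right₀ (onelek k) (le_max_right _ _)
  have p1 : |w k| ≤ C1 * ((k:ℝ)+1)^(max N1 N2) :=
    (h1 k).trans (mul_le_mul_of_nonneg_left e1 hC1)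
  have p2 : |v k| ≤ C2 * ((k:ℝ)+1)^(max N1 N2) :=
    (h2 k).trans (mul_le_mul_of_nonneg_left e2 hC2)
  calc |w k + v k| ≤ |w k| + |v k| := abs_add_le _ _
    _ ≤ C1 * ((k:ℝ)+1)^(max N1 N2) + C2 * ((k:ℝ)+1)^(max N1 N2) := by linarith
    _ = (C1 + C2) * ((k:ℝ)+1)^(max N1 N2) := by ring

lemma PolyBd.neg {w : ℕ → ℝ} (hw : PolyBd w) : PolyBd (fun k => -(w k)) := by
  obtain ⟨C, N, hC, h⟩ := hw
  exact ⟨C, N, hC, fun k => by rw [abs_neg]; exact h k⟩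

lemma PolyBd.sub {w v : ℕ → ℝ} (hw : PolyBd w) (hv : PolyBd v) :
    PolyBd (fun k => w k - v k) := by
  have := hw.add hv.neg
  simpa [sub_eq_add_neg] using this

lemma PolyBd.congr {w v : ℕ → ℝ} (hw : PolyBd w) (h : ∀ k, v k = w k) : PolyBd v := by
  obtain ⟨C, N, hC, hb⟩ := hw
  exact ⟨C, N, hC, fun k => by rw [h k]; exact hb k⟩

lemma poly_bound {φ : ℕ → ℝ} (h : ∃ C d : ℝ, ∀ k : ℕ, |φ k| ≤ C * ((k : ℝ) + 1) ^ d) :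
    PolyBd φ := by
  obtain ⟨C, d, hC⟩ := h
  have hC0 : 0 ≤ C := by
    have := hC 0
    simp only [Nat.cast_zero, zero_add, Real.one_rpow] at this
    exact le_trans (abs_nonneg _) (by simpa using this)
  refine ⟨C, ⌈d⌉₊, hC0, fun k => ?_⟩
  refine (hC k).trans ?_
  have h1 : ((k:ℝ)+1) ^ d ≤ ((k:ℝ)+1) ^ (⌈d⌉₊ : ℝ) :=
    Real.rpow_le_rpow_of_exponent_le (onelek k) (Nat.le_ceil d)
  rw [Real.rpow_natCast] at h1
  exact mul_le_mul_of_nonneg_left h1 hC0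

lemma geom_poly_summable (N : ℕ) {u : ℝ} (hu : 1 < u) :
    Summable (fun k : ℕ => ((k : ℝ) + 1) ^ N * (1 / u) ^ k) := by
  have hu0 : (0:ℝ) < u := lt_trans one_pos hu
  have hr : ‖(1/u : ℝ)‖ < 1 := by
    rw [Real.norm_eq_abs, abs_of_pos (by positivity)]
    rw [div_lt_one hu0]; linarith
  have h : Summable (fun k : ℕ =>
      ∑ j ∈ Finset.range (N+1), (N.choose j : ℝ) * ((k:ℝ)^j * (1/u)^k)) :=
    summable_sum fun j _ =>
      ((summable_pow_mul_geometric_of_norm_lt_one j hr).mul_left _)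
  refine h.congr fun k => ?_
  rw [show ((k:ℝ)+1) = ((k:ℝ)+1) from rfl, add_pow, Finset.sum_mul]
  refine Finset.sum_congr rfl fun j hj => ?_
  ring

lemma diag_tsum {F : ℕ × ℕ → ℝ} (hF : Summable F) :
    ∑' p : ℕ × ℕ, F p = ∑' m : ℕ, ∑ i ∈ Finset.range (m+1), F (i, m - i) := by
  have h1 : Summable (F ∘ Finset.HasAntidiagonal.sigmaAntidiagonalEquivProd) :=
    Finset.HasAntidiagonal.sigmaAntidiagonalEquivProd.summable_iff.2 hF
  rw [← Finset.HasAntidiagonal.sigmaAntidiagonalEquivProd.tsum_eq F]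
  rw [show (fun c : (n : ℕ) × (Finset.HasAntidiagonal.antidiagonal n : Finset (ℕ × ℕ)) =>
      F (Finset.HasAntidiagonal.sigmaAntidiagonalEquivProd c)) = F ∘ Finset.HasAntidiagonal.sigmaAntidiagonalEquivProd from rfl,
    Summable.tsum_sigma h1]
  refine tsum_congr fun m => ?_
  rw [show (fun c : (Finset.HasAntidiagonal.antidiagonal m : Finset (ℕ × ℕ)) =>
      (F ∘ Finset.HasAntidiagonal.sigmaAntidiagonalEquivProd) ⟨m, c⟩) = fun c => F c.1 from rfl,
    Finset.tsum_subtype (Finset.HasAntidiagonal.antidiagonal m) F,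
    Finset.Nat.sum_antidiagonal_eq_sum_range_succ_mk]

lemma refl_sum (c : ℕ → ℝ) (m : ℕ) :
    2 * ∑ i ∈ Finset.range (m+1), (i:ℝ) * (c i * c (m - i))
      = (m:ℝ) * ∑ i ∈ Finset.range (m+1), c i * c (m - i) := by
  have hrefl := Finset.sum_range_reflect (fun i => (i:ℝ) * (c i * c (m - i))) (m+1)
  rw [two_mul]
  nth_rewrite 1 [← hrefl]
  rw [← Finset.sum_add_distrib, Finset.mul_sum]
  refine Finset.sum_congr rfl fun j hj => ?_
  have hj' : j ≤ m := Nat.lt_succ_iff.mp (Finset.mem_range.mp hj)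
  have h1 : m + 1 - 1 - j = m - j := by omega
  have h2 : m - (m - j) = j := by omega
  rw [h1, h2]
  have h3 : ((m - j : ℕ) : ℝ) = (m:ℝ) - (j:ℝ) := by
    rw [Nat.cast_sub hj']
  rw [h3]
  ring

lemma kl_bound (k l : ℕ) (N : ℕ) :
    (((k + l : ℕ) : ℝ) + 1) ^ N ≤ ((k:ℝ)+1)^N * ((l:ℝ)+1)^N := by
  rw [← mul_pow]
  refine pow_le_pow_left₀ (by positivity) ?_ N
  push_cast
  nlinarith [Nat.cast_nonneg (α := ℝ) k, Nat.cast_nonneg (α := ℝ) l]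

section WithC

variable {n : ℕ} {c : ℕ → ℝ} {m0 : ℝ}
  (hc0 : c 0 = 0) (hpos : ∀ k, 0 ≤ c k) (hm0pos : 0 < m0)
  (hgeom : ∃ u : ℝ, 1 < u ∧ Summable (fun k : ℕ => u ^ k * c k))
  (hrec : ∀ k : ℕ, 2 ≤ k →
      (2 + ((k : ℝ) - 1) / (n : ℝ)) * c k = (1 / m0) * ∑ i ∈ Finset.Ico 1 k, c i * c (k - i))

include hpos hgeom in
lemma poly_c_summable (N : ℕ) : Summable (fun k : ℕ => ((k : ℝ) + 1) ^ N * c k) := by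
  obtain ⟨u, hu, hs⟩ := hgeom
  have hu0 : (0:ℝ) < u := lt_trans one_pos hu
  set A := ∑' j : ℕ, u ^ j * c j with hA
  have hcb : ∀ k, c k ≤ A * (1/u) ^ k := by
    intro k
    have h1 : u ^ k * c k ≤ A :=
      Summable.le_tsum hs k (fun j _ => mul_nonneg (pow_nonneg hu0.le j) (hpos j))
    have h2 : (0:ℝ) < u ^ k := pow_pos hu0 k
    have h3 : c k = (u ^ k * c k) * (1/u) ^ k := by
      rw [one_div, inv_pow]; field_simp
    rw [h3]
    exact mul_le_mul_of_nonneg_right h1 (by positivity)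
  refine Summable.of_nonneg_of_le
    (fun k => mul_nonneg (by positivity) (hpos k))
    (fun k => ?_) ((geom_poly_summable N hu).mul_right A)
  calc ((k:ℝ)+1)^N * c k ≤ ((k:ℝ)+1)^N * (A * (1/u)^k) :=
        mul_le_mul_of_nonneg_left (hcb k) (by positivity)
    _ = ((k:ℝ)+1)^N * (1/u)^k * A := by ring

include hpos hgeom in
lemma wsum_summable {w : ℕ → ℝ} (hw : PolyBd w) :
    Summable (fun k : ℕ => w k * c k) := by
  obtain ⟨C, N, hC, hb⟩ := hw
  refine Summable.of_norm_bounded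
    (((poly_c_summable hpos hgeom N).mul_left C).congr (fun k => rfl)) (fun k => ?_)
  rw [Real.norm_eq_abs, abs_mul, abs_of_nonneg (hpos k)]
  exact mul_le_mul_of_nonneg_right (hb k) (hpos k) |>.trans (by rw [mul_assoc])

include hpos hgeom in
lemma diag_summable {w : ℕ → ℝ} (hw : PolyBd w) :
    Summable (fun p : ℕ × ℕ => w (p.1 + p.2) * c p.1 * c p.2) := by
  obtain ⟨C, N, hC, hb⟩ := hw
  have h1 : Summable (fun k : ℕ => C * (((k:ℝ)+1)^N * c k)) :=
    (poly_c_summable hpos hgeom N).mul_left C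
  have h2 := poly_c_summable hpos hgeom N
  have n1 : 0 ≤ (fun k : ℕ => C * (((k:ℝ)+1)^N * c k)) := by
    intro k; have := hpos k; positivity
  have n2 : 0 ≤ (fun k : ℕ => ((k:ℝ)+1)^N * c k) := by
    intro k; have := hpos k; positivity
  have hsum := Summable.mul_of_nonneg h1 h2 n1 n2
  refine Summable.of_norm_bounded hsum (fun p => ?_)
  show ‖w (p.1 + p.2) * c p.1 * c p.2‖ ≤ (C * (((p.1:ℝ)+1)^N * c p.1)) * (((p.2:ℝ)+1)^N * c p.2)
  rw [Real.norm_eq_abs, abs_mul, abs_mul, abs_of_nonneg (hpos p.1), abs_of_nonneg (hpos p.2)]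
  have key : |w (p.1+p.2)| ≤ C * (((p.1:ℝ)+1)^N * ((p.2:ℝ)+1)^N) :=
    (hb (p.1+p.2)).trans (mul_le_mul_of_nonneg_left (kl_bound p.1 p.2 N) hC)
  calc |w (p.1+p.2)| * c p.1 * c p.2
      ≤ (C * (((p.1:ℝ)+1)^N * ((p.2:ℝ)+1)^N)) * c p.1 * c p.2 :=
        mul_le_mul_of_nonneg_right (mul_le_mul_of_nonneg_right key (hpos p.1)) (hpos p.2)
    _ = (C * (((p.1:ℝ)+1)^N * c p.1)) * (((p.2:ℝ)+1)^N * c p.2) := by ring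

include hpos hgeom in
lemma diag_summable' {w : ℕ → ℝ} (hw : PolyBd w) :
    Summable (fun p : ℕ × ℕ => w (p.1 + p.2) * (p.1 : ℝ) * c p.1 * c p.2) := by
  obtain ⟨C, N, hC, hb⟩ := hw
  have h1 : Summable (fun k : ℕ => C * (((k:ℝ)+1)^(N+1) * c k)) :=
    (poly_c_summable hpos hgeom (N+1)).mul_left C
  have h2 := poly_c_summable hpos hgeom N
  have n1 : 0 ≤ (fun k : ℕ => C * (((k:ℝ)+1)^(N+1) * c k)) := by
    intro k; have := hpos k; positivity
  have n2 : 0 ≤ (fun k : ℕ => ((k:ℝ)+1)^N * c k) := by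
    intro k; have := hpos k; positivity
  have hsum := Summable.mul_of_nonneg h1 h2 n1 n2
  refine Summable.of_norm_bounded hsum (fun p => ?_)
  show ‖w (p.1 + p.2) * (p.1:ℝ) * c p.1 * c p.2‖ ≤
    (C * (((p.1:ℝ)+1)^(N+1) * c p.1)) * (((p.2:ℝ)+1)^N * c p.2)
  rw [Real.norm_eq_abs, abs_mul, abs_mul, abs_mul, abs_of_nonneg (hpos p.1),
    abs_of_nonneg (hpos p.2), abs_of_nonneg (Nat.cast_nonneg (α := ℝ) p.1)]
  have key0 : |w (p.1+p.2)| ≤ C * (((p.1:ℝ)+1)^N * ((p.2:ℝ)+1)^N) :=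
    (hb (p.1+p.2)).trans (mul_le_mul_of_nonneg_left (kl_bound p.1 p.2 N) hC)
  have key : |w (p.1+p.2)| * (p.1:ℝ) ≤ C * (((p.1:ℝ)+1)^(N+1) * ((p.2:ℝ)+1)^N) := by
    have e1 : |w (p.1+p.2)| * (p.1:ℝ) ≤ (C * (((p.1:ℝ)+1)^N * ((p.2:ℝ)+1)^N)) * ((p.1:ℝ)+1) :=
      mul_le_mul key0 (by linarith [Nat.cast_nonneg (α := ℝ) p.1]) (Nat.cast_nonneg _)
        (le_trans (abs_nonneg _) key0)
    refine e1.trans (le_of_eq ?_)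
    rw [pow_succ]; ring
  calc |w (p.1+p.2)| * (p.1:ℝ) * c p.1 * c p.2
      ≤ (C * (((p.1:ℝ)+1)^(N+1) * ((p.2:ℝ)+1)^N)) * c p.1 * c p.2 :=
        mul_le_mul_of_nonneg_right (mul_le_mul_of_nonneg_right key (hpos p.1)) (hpos p.2)
    _ = (C * (((p.1:ℝ)+1)^(N+1) * c p.1)) * (((p.2:ℝ)+1)^N * c p.2) := by ring

lemma prod_summable {g h : ℕ → ℝ} (hg : Summable g) (hh : Summable h) :
    Summable (fun p : ℕ × ℕ => g p.1 * h p.2) := by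
  refine Summable.of_norm_bounded
    (Summable.mul_of_nonneg hg.abs hh.abs (fun _ => abs_nonneg _) (fun _ => abs_nonneg _))
    (fun p => ?_)
  rw [Real.norm_eq_abs, abs_mul]

lemma prod_tsum {g h : ℕ → ℝ} (hg : Summable g) (hh : Summable h) :
    ∑' p : ℕ × ℕ, g p.1 * h p.2 = (∑' k, g k) * ∑' k, h k := by
  rw [Summable.tsum_prod' (prod_summable hg hh) (fun b => hh.mul_left (g b))]
  simp_rw [tsum_mul_left]
  rw [tsum_mul_right]

lemma polyD (n : ℕ) : PolyBd (fun m => 2 + ((m:ℝ) - 1) / (n:ℝ)) := by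
  refine PolyBd.congr (PolyBd.add (PolyBd.const 2)
    (PolyBd.mul (PolyBd.sub PolyBd.cast (PolyBd.const 1)) (PolyBd.const (1/(n:ℝ)))))
    (fun k => ?_)
  rw [div_eq_mul_one_div]

include hc0 hm0pos hrec in
lemma S'_eq (m : ℕ) : (∑ i ∈ Finset.range (m+1), c i * c (m - i))
    = m0 * ((2 + ((m:ℝ) - 1) / (n:ℝ)) * c m) - (if m = 1 then 2 * m0 * c 1 else 0) := by
  rcases Nat.lt_or_ge m 2 with hm | hm
  · interval_cases m
    · simp [hc0]
    · simp [Finset.sum_range_succ, hc0]; ring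
  · have h1 : (∑ i ∈ Finset.range (m+1), c i * c (m - i))
        = ∑ i ∈ Finset.Ico 1 m, c i * c (m - i) := by
      refine (Finset.sum_subset (fun x hx => ?_) (fun x hx hx' => ?_)).symm
      · rw [Finset.mem_Ico] at hx; rw [Finset.mem_range]; omega
      · rw [Finset.mem_range] at hx; rw [Finset.mem_Ico] at hx'
        rcases (by omega : x = 0 ∨ x = m) with h | h
        · rw [h, hc0, zero_mul]
        · rw [h, Nat.sub_self, hc0, mul_zero]
    have h2 := hrec m hm
    have hne : m ≠ 1 := by omega
    rw [h1, if_neg hne, sub_zero, h2]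
    field_simp

include hc0 hpos hm0pos hgeom hrec in
lemma core2 {w : ℕ → ℝ} (hw : PolyBd w) :
    ∑' m : ℕ, w m * ∑ i ∈ Finset.range (m+1), c i * c (m - i)
      = m0 * (∑' m : ℕ, w m * ((2 + ((m:ℝ) - 1) / (n:ℝ)) * c m)) - 2 * m0 * w 1 * c 1 := by
  have hcongr : ∀ m : ℕ, w m * ∑ i ∈ Finset.range (m+1), c i * c (m - i)
      = m0 * (w m * ((2 + ((m:ℝ) - 1) / (n:ℝ)) * c m))
        - (if m = 1 then w 1 * (2 * m0 * c 1) else 0) := by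
    intro m
    rw [S'_eq hc0 hm0pos hrec m]
    by_cases hm : m = 1
    · subst hm; simp only [if_pos]; ring
    · rw [if_neg hm, if_neg hm]; ring
  rw [tsum_congr hcongr]
  have hA : Summable (fun m : ℕ => m0 * (w m * ((2 + ((m:ℝ) - 1) / (n:ℝ)) * c m))) := by
    refine ((wsum_summable hpos hgeom (hw.mul (polyD n))).mul_left m0).congr (fun m => ?_)
    ring
  have hB : Summable (fun m : ℕ => if m = 1 then w 1 * (2 * m0 * c 1) else 0) :=
    (hasSum_ite_eq 1 (w 1 * (2 * m0 * c 1))).summable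
  rw [Summable.tsum_sub hA hB, tsum_mul_left, (hasSum_ite_eq 1 (w 1 * (2 * m0 * c 1))).tsum_eq]
  ring

include hc0 hpos hm0pos hgeom hrec in
lemma core_w {w : ℕ → ℝ} (hw : PolyBd w) :
    ∑' p : ℕ × ℕ, w (p.1 + p.2) * c p.1 * c p.2
      = m0 * (∑' m : ℕ, w m * ((2 + ((m:ℝ) - 1) / (n:ℝ)) * c m)) - 2 * m0 * w 1 * c 1 := by
  rw [diag_tsum (diag_summable hpos hgeom hw)]
  have hcongr : ∀ m : ℕ, (∑ i ∈ Finset.range (m+1), w (i + (m - i)) * c i * c (m - i))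
      = w m * ∑ i ∈ Finset.range (m+1), c i * c (m - i) := by
    intro m
    rw [Finset.mul_sum]
    refine Finset.sum_congr rfl fun i hi => ?_
    rw [Nat.add_sub_cancel' (Nat.lt_succ_iff.mp (Finset.mem_range.mp hi))]
    ring
  rw [tsum_congr hcongr]
  exact core2 hc0 hpos hm0pos hgeom hrec hw

include hc0 hpos hm0pos hgeom hrec in
lemma core_w2 {w : ℕ → ℝ} (hw : PolyBd w) :
    2 * ∑' p : ℕ × ℕ, w (p.1 + p.2) * (p.1 : ℝ) * c p.1 * c p.2
      = m0 * (∑' m : ℕ, (w m * (m:ℝ)) * ((2 + ((m:ℝ) - 1) / (n:ℝ)) * c m))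
        - 2 * m0 * w 1 * c 1 := by
  rw [diag_tsum (diag_summable' hpos hgeom hw), ← tsum_mul_left]
  have hcongr : ∀ m : ℕ,
      2 * (∑ i ∈ Finset.range (m+1), w (i + (m - i)) * (i:ℝ) * c i * c (m - i))
      = (w m * (m:ℝ)) * ∑ i ∈ Finset.range (m+1), c i * c (m - i) := by
    intro m
    have h1 : (∑ i ∈ Finset.range (m+1), w (i + (m - i)) * (i:ℝ) * c i * c (m - i))
        = w m * ∑ i ∈ Finset.range (m+1), (i:ℝ) * (c i * c (m - i)) := by
      rw [Finset.mul_sum]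
      refine Finset.sum_congr rfl fun i hi => ?_
      rw [Nat.add_sub_cancel' (Nat.lt_succ_iff.mp (Finset.mem_range.mp hi))]
      ring
    rw [h1, show 2 * (w m * ∑ i ∈ Finset.range (m+1), (i:ℝ) * (c i * c (m - i)))
      = w m * (2 * ∑ i ∈ Finset.range (m+1), (i:ℝ) * (c i * c (m - i))) from by ring,
      refl_sum c m]
    ring
  rw [tsum_congr hcongr]
  have := core2 hc0 hpos hm0pos hgeom hrec (w := fun m => w m * (m:ℝ)) (hw.mul PolyBd.cast)
  rw [this]
  norm_num

include hpos hgeom in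
lemma TD_split {w : ℕ → ℝ} (hw : PolyBd w) :
    ∑' m : ℕ, w m * ((2 + ((m:ℝ) - 1) / (n:ℝ)) * c m)
      = 2 * (∑' m : ℕ, w m * c m)
        + (1/(n:ℝ)) * ∑' m : ℕ, (w m * ((m:ℝ) - 1)) * c m := by
  have hA : Summable (fun m : ℕ => 2 * (w m * c m)) :=
    (wsum_summable hpos hgeom hw).mul_left 2
  have hB : Summable (fun m : ℕ => (1/(n:ℝ)) * ((w m * ((m:ℝ) - 1)) * c m)) :=
    ((wsum_summable hpos hgeom (hw.mul (PolyBd.cast.sub (PolyBd.const 1)))).mul_left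
      (1/(n:ℝ)))
  have hcongr : ∀ m : ℕ, w m * ((2 + ((m:ℝ) - 1) / (n:ℝ)) * c m)
      = 2 * (w m * c m) + (1/(n:ℝ)) * ((w m * ((m:ℝ) - 1)) * c m) := by
    intro m; ring
  rw [tsum_congr hcongr, Summable.tsum_add hA hB, tsum_mul_left, tsum_mul_left]

end WithC

end AuxStmt13

theorem stmt13 (n : ℕ) (hn : 1 ≤ n) (c : ℕ → ℝ) (m0 : ℝ)
    (hc0 : c 0 = 0) (hpos : ∀ k, 0 ≤ c k)
    (hm1 : HasSum (fun k : ℕ => (k : ℝ) * c k) 1)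
    (hm0 : HasSum c m0) (hm0pos : 0 < m0)
    (hgeom : ∃ u : ℝ, 1 < u ∧ Summable (fun k : ℕ => u ^ k * c k))
    (hrec : ∀ k : ℕ, 2 ≤ k →
      (2 + ((k : ℝ) - 1) / (n : ℝ)) * c k = (1 / m0) * ∑ i ∈ Finset.Ico 1 k, c i * c (k - i))
    (φ ψ : ℕ → ℝ)
    (hφ : ∃ C d : ℝ, ∀ k : ℕ, |φ k| ≤ C * ((k : ℝ) + 1) ^ d)
    (hψ : ∃ C d : ℝ, ∀ k : ℕ, |ψ k| ≤ C * ((k : ℝ) + 1) ^ d) :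
    (1 / m0) * ∑' p : ℕ × ℕ, (φ (p.1 + p.2) - φ p.1 - φ p.2) * c p.1 * c p.2
        = (1 / (n : ℝ)) * ∑' k : ℕ, (φ k - (k : ℝ) * φ 1) * ((k : ℝ) - 1) * c k
    ∧ (2 / m0) * ∑' p : ℕ × ℕ, (ψ (p.1 + p.2) - ψ p.1) * (p.1 : ℝ) * c p.1 * c p.2
        = (1 / (n : ℝ)) * ∑' k : ℕ, (ψ k - ψ 1) * (k : ℝ) * ((k : ℝ) - 1) * c k := by
  have hφP : PolyBd φ := poly_bound hφ
  have hψP : PolyBd ψ := poly_bound hψ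
  have hm0ne : m0 ≠ 0 := ne_of_gt hm0pos
  have hnpos : (0:ℝ) < (n:ℝ) := by exact_mod_cast Nat.pos_of_ne_zero (by omega)
  have hnne : (n:ℝ) ≠ 0 := ne_of_gt hnpos
  -- the moment identity K : ∑' m, m (m-1) c m = 2 n c 1
  have hK : ∑' m : ℕ, (((m:ℝ)) * ((m:ℝ) - 1)) * c m = 2 * (n:ℝ) * c 1 := by
    have h1 := core_w hc0 hpos hm0pos hgeom hrec (w := fun k => (k:ℝ)) PolyBd.cast
    have h2 : ∑' p : ℕ × ℕ, ((p.1 + p.2 : ℕ):ℝ) * c p.1 * c p.2 = 2 * m0 := by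
      have hpt : ∀ p : ℕ × ℕ, ((p.1 + p.2 : ℕ):ℝ) * c p.1 * c p.2
          = ((p.1:ℝ) * c p.1) * c p.2 + c p.1 * ((p.2:ℝ) * c p.2) := by
        intro p; push_cast; ring
      rw [tsum_congr hpt,
        Summable.tsum_add (prod_summable hm1.summable hm0.summable)
          (prod_summable hm0.summable hm1.summable),
        prod_tsum hm1.summable hm0.summable, prod_tsum hm0.summable hm1.summable,
        hm1.tsum_eq, hm0.tsum_eq]
      ring
    rw [h2] at h1
    rw [TD_split hpos hgeom PolyBd.cast] at h1
    rw [hm1.tsum_eq] at h1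
    norm_num at h1
    have := h1
    field_simp at this ⊢
    nlinarith [this]
  constructor
  · -- first identity
    have hf1 := diag_summable hpos hgeom hφP
    have hf2 := prod_summable (wsum_summable hpos hgeom hφP) hm0.summable
    have hf3 := prod_summable hm0.summable (wsum_summable hpos hgeom hφP)
    have hpt : ∀ p : ℕ × ℕ, (φ (p.1 + p.2) - φ p.1 - φ p.2) * c p.1 * c p.2
        = (φ (p.1 + p.2) * c p.1 * c p.2 - (φ p.1 * c p.1) * c p.2)
          - c p.1 * (φ p.2 * c p.2) := by
      intro p; ring
    rw [tsum_congr hpt, Summable.tsum_sub (hf1.sub hf2) hf3, Summable.tsum_sub hf1 hf2,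
      core_w hc0 hpos hm0pos hgeom hrec hφP,
      prod_tsum (wsum_summable hpos hgeom hφP) hm0.summable,
      prod_tsum hm0.summable (wsum_summable hpos hgeom hφP),
      hm0.tsum_eq, TD_split hpos hgeom hφP]
    -- right-hand side
    have hRpt : ∀ k : ℕ, (φ k - (k:ℝ) * φ 1) * ((k:ℝ) - 1) * c k
        = (φ k * ((k:ℝ) - 1)) * c k - φ 1 * ((((k:ℝ)) * ((k:ℝ) - 1)) * c k) := by
      intro k; ring
    have hRA : Summable (fun k : ℕ => (φ k * ((k:ℝ) - 1)) * c k) :=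
      wsum_summable hpos hgeom (hφP.mul (PolyBd.cast.sub (PolyBd.const 1)))
    have hRB : Summable (fun k : ℕ => φ 1 * ((((k:ℝ)) * ((k:ℝ) - 1)) * c k)) :=
      (wsum_summable hpos hgeom (PolyBd.cast.mul (PolyBd.cast.sub (PolyBd.const 1)))).mul_left
        (φ 1)
    rw [tsum_congr hRpt, Summable.tsum_sub hRA hRB, tsum_mul_left, hK]
    field_simp
    ring
  · -- second identity
    have hg1 := diag_summable' hpos hgeom hψP
    have hg2 := prod_summable (wsum_summable hpos hgeom (hψP.mul PolyBd.cast)) hm0.summable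
    have hpt : ∀ p : ℕ × ℕ, (ψ (p.1 + p.2) - ψ p.1) * (p.1:ℝ) * c p.1 * c p.2
        = ψ (p.1 + p.2) * (p.1:ℝ) * c p.1 * c p.2
          - ((ψ p.1 * (p.1:ℝ)) * c p.1) * c p.2 := by
      intro p; ring
    have hcore := core_w2 hc0 hpos hm0pos hgeom hrec hψP
    rw [TD_split hpos hgeom (hψP.mul PolyBd.cast)] at hcore
    have hT2 : ∑' p : ℕ × ℕ, ((ψ p.1 * (p.1:ℝ)) * c p.1) * c p.2
        = (∑' k : ℕ, (ψ k * (k:ℝ)) * c k) * m0 := by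
      rw [prod_tsum (wsum_summable hpos hgeom (hψP.mul PolyBd.cast)) hm0.summable,
        hm0.tsum_eq]
    rw [tsum_congr hpt, Summable.tsum_sub hg1 hg2, hT2]
    have hRpt : ∀ k : ℕ, (ψ k - ψ 1) * (k:ℝ) * ((k:ℝ) - 1) * c k
        = ((ψ k * (k:ℝ)) * ((k:ℝ) - 1)) * c k
          - ψ 1 * ((((k:ℝ)) * ((k:ℝ) - 1)) * c k) := by
      intro k; ring
    have hRA : Summable (fun k : ℕ => ((ψ k * (k:ℝ)) * ((k:ℝ) - 1)) * c k) :=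
      wsum_summable hpos hgeom ((hψP.mul PolyBd.cast).mul (PolyBd.cast.sub (PolyBd.const 1)))
    have hRB : Summable (fun k : ℕ => ψ 1 * ((((k:ℝ)) * ((k:ℝ) - 1)) * c k)) :=
      (wsum_summable hpos hgeom (PolyBd.cast.mul (PolyBd.cast.sub (PolyBd.const 1)))).mul_left
        (ψ 1)
    rw [tsum_congr hRpt, Summable.tsum_sub hRA hRB, tsum_mul_left, hK]
    -- now use hcore : 2 * T1 = m0 * (2 * Sψ' + (1/n) * R) - 2 * m0 * ψ 1 * c 1
    set T1 := ∑' p : ℕ × ℕ, ψ (p.1 + p.2) * (p.1:ℝ) * c p.1 * c p.2 with hT1def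
    set S := ∑' k : ℕ, (ψ k * (k:ℝ)) * c k with hSdef
    set R := ∑' k : ℕ, ((ψ k * (k:ℝ)) * ((k:ℝ) - 1)) * c k with hRdef
    have goal_eq : (2 / m0) * (T1 - S * m0)
        = (1/(n:ℝ)) * (R - ψ 1 * (2 * (n:ℝ) * c 1)) := by
      have h2T1 : 2 * T1 = m0 * (2 * S + (1/(n:ℝ)) * R) - 2 * m0 * ψ 1 * c 1 := hcore
      field_simp at h2T1 ⊢
      nlinarith [h2T1]
    exact goal_eq
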